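/- Let τ ∈ (0,1), let Y be a real random variable whose law is absolutely continuous with P(Y ≤ μ₀) = τ for some μ₀ ∈ ℝ, and let μ̃ ∈ ℝ. Then E[ρ_τ(Y − μ̃)] − E[ρ_τ(Y − μ₀)] ≤ |μ̃ − μ₀| · P(0 < |Y − μ₀| < |μ̃ − μ₀|) ≤ |μ̃ − μ₀|. -/

import Mathlib

open MeasureTheory ProbabilityTheory Real Filter
open scoped ENNReal Topology NNReal

noncomputable section

/-- Check (quantile-loss) function `ρ_τ(u) = u (τ − 1_{u<0})`. -/
def checkFun (τ u : ℝ) : ℝ := u * (τ - if u < 0 then 1 else 0)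

/-- Asymmetric Laplace density with location `μ`, scale `1`, skewness `τ`. -/
def ald (τ y μ : ℝ) : ℝ := τ * (1 - τ) * Real.exp (-(checkFun τ (y - μ)))

lemma checkFun_measurable (τ : ℝ) : Measurable (checkFun τ) := by
  unfold checkFun
  exact measurable_id.mul (measurable_const.sub
    (Measurable.ite (measurableSet_lt measurable_id measurable_const) measurable_const measurable_const))

lemma checkFun_lip {τ : ℝ} (h0 : 0 ≤ τ) (h1 : τ ≤ 1) (a b : ℝ) :
    |checkFun τ a - checkFun τ b| ≤ |a - b| := by
  unfold checkFun
  rcases abs_cases (a - b) with ⟨he, hs⟩ | ⟨he, hs⟩ <;> rw [he, abs_le] <;> constructor <;>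
    split_ifs <;> nlinarith

lemma key (τ u v : ℝ) (hu : u ≠ 0) :
    checkFun τ (u - v) - checkFun τ u - v * ((if u ≤ 0 then 1 else 0) - τ)
      ≤ |v| * (if 0 < |u| ∧ |u| < |v| then 1 else 0) := by
  unfold checkFun
  by_cases h1 : u - v < 0 <;> by_cases h2 : u < 0 <;> by_cases h3 : u ≤ 0 <;>
    by_cases h4 : 0 < |u| ∧ |u| < |v| <;>
    simp only [h1, h2, h3, h4, if_true, if_false, if_pos, if_neg, not_false_iff] <;>
    rcases abs_cases u with ⟨e1, s1⟩ | ⟨e1, s1⟩ <;> rcases abs_cases v with ⟨e2, s2⟩ | ⟨e2, s2⟩ <;>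
    simp only [e1, e2, and_self, if_true, true_and, and_true] at h4 ⊢ <;> try push_neg at h4
  all_goals
    first
      | nlinarith [hu.lt_or_gt]
      | nlinarith [h4.1, h4.2]
      | nlinarith [h4 (by linarith)]
      | nlinarith [h4 (by cases hu.lt_or_gt <;> linarith)]

/-- For a real random variable `Y` with absolutely continuous law and `P(Y ≤ μ₀) = τ`,
the excess expected check loss at `μ̃` over the loss at the true `τ`-quantile `μ₀` is at
most `|μ̃ − μ₀| · P(0 < |Y − μ₀| < |μ̃ − μ₀|) ≤ |μ̃ − μ₀|`. -/
theorem check_loss_excess_bound {Ω : Type} [MeasurableSpace Ω] (P : Measure Ω)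
    [IsProbabilityMeasure P] (τ : ℝ) (hτ : τ ∈ Set.Ioo (0 : ℝ) 1)
    (Y : Ω → ℝ) (hY : Measurable Y)
    (hac : Measure.map Y P ≪ (volume : Measure ℝ))
    (μ₀ : ℝ) (hq : P {ω | Y ω ≤ μ₀} = ENNReal.ofReal τ) (μt : ℝ) :
    (∫ ω, (checkFun τ (Y ω - μt) - checkFun τ (Y ω - μ₀)) ∂P)
        ≤ |μt - μ₀| * (P {ω | 0 < |Y ω - μ₀| ∧ |Y ω - μ₀| < |μt - μ₀|}).toReal ∧
      |μt - μ₀| * (P {ω | 0 < |Y ω - μ₀| ∧ |Y ω - μ₀| < |μt - μ₀|}).toReal ≤ |μt - μ₀| := by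
  obtain ⟨hτ0, hτ1⟩ := hτ
  set v := μt - μ₀ with hv
  set E := {ω | 0 < |Y ω - μ₀| ∧ |Y ω - μ₀| < |v|} with hE
  have hmsub : Measurable fun ω => Y ω - μ₀ := hY.sub measurable_const
  have hmg : Measurable fun ω => checkFun τ (Y ω - μt) - checkFun τ (Y ω - μ₀) :=
    ((checkFun_measurable τ).comp (hY.sub measurable_const)).sub
      ((checkFun_measurable τ).comp hmsub)
  have hAset : MeasurableSet {ω | Y ω - μ₀ ≤ 0} := measurableSet_le hmsub measurable_const
  have hEset : MeasurableSet E :=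
    (measurableSet_lt measurable_const hmsub.abs).inter
      (measurableSet_lt hmsub.abs measurable_const)
  -- the correction function
  set c : Ω → ℝ := fun ω => v * ((if Y ω - μ₀ ≤ 0 then (1:ℝ) else 0) - τ) with hc
  have hmc : Measurable c :=
    measurable_const.mul
      ((Measurable.ite hAset measurable_const measurable_const).sub measurable_const)
  set ψ : Ω → ℝ := fun ω => |v| * (if 0 < |Y ω - μ₀| ∧ |Y ω - μ₀| < |v| then (1:ℝ) else 0)
    with hψ
  have hmψ : Measurable ψ :=
    measurable_const.mul (Measurable.ite hEset measurable_const measurable_const)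
  -- integrability
  have hig : Integrable (fun ω => checkFun τ (Y ω - μt) - checkFun τ (Y ω - μ₀)) P := by
    refine Integrable.mono' (integrable_const |v|) hmg.aestronglyMeasurable
      (Filter.Eventually.of_forall fun ω => ?_)
    have h := checkFun_lip hτ0.le hτ1.le (Y ω - μt) (Y ω - μ₀)
    have h2 : (Y ω - μt) - (Y ω - μ₀) = -v := by rw [hv]; ring
    rw [h2, abs_neg] at h
    simpa [Real.norm_eq_abs] using h
  have hic : Integrable c P := by
    refine Integrable.mono' (integrable_const |v|) hmc.aestronglyMeasurable
      (Filter.Eventually.of_forall fun ω => ?_)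
    have hb : |(if Y ω - μ₀ ≤ 0 then (1:ℝ) else 0) - τ| ≤ 1 := by
      split_ifs <;> rw [abs_le] <;> constructor <;> linarith
    rw [Real.norm_eq_abs, hc, abs_mul]
    nlinarith [abs_nonneg v]
  have hiψ : Integrable ψ P := by
    refine Integrable.mono' (integrable_const |v|) hmψ.aestronglyMeasurable
      (Filter.Eventually.of_forall fun ω => ?_)
    rw [Real.norm_eq_abs, hψ]
    simp only
    rw [abs_mul, abs_abs]
    split_ifs <;> simp [abs_nonneg]
  -- Y ≠ μ₀ a.e.
  have hnull : P {ω | Y ω = μ₀} = 0 := by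
    have h1 : {ω | Y ω = μ₀} = Y ⁻¹' {μ₀} := rfl
    rw [h1, ← Measure.map_apply hY (measurableSet_singleton μ₀)]
    exact hac (by simp)
  have hane : ∀ᵐ ω ∂P, Y ω ≠ μ₀ := by
    rw [ae_iff]
    simpa using hnull
  -- a.e. pointwise bound
  have hae : ∀ᵐ ω ∂P, (checkFun τ (Y ω - μt) - checkFun τ (Y ω - μ₀)) - c ω ≤ ψ ω := by
    filter_upwards [hane] with ω hω
    have hu : Y ω - μ₀ ≠ 0 := sub_ne_zero.mpr hω
    have h := key τ (Y ω - μ₀) v hu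
    have h2 : Y ω - μ₀ - v = Y ω - μt := by rw [hv]; ring
    rw [h2] at h
    exact h
  -- ∫ c = 0
  have hqA : P {ω | Y ω - μ₀ ≤ 0} = ENNReal.ofReal τ := by
    have : {ω | Y ω - μ₀ ≤ 0} = {ω | Y ω ≤ μ₀} := by ext ω; simp [sub_nonpos]
    rw [this, hq]
  have hind : (fun ω => if Y ω - μ₀ ≤ 0 then (1:ℝ) else 0)
      = Set.indicator {ω | Y ω - μ₀ ≤ 0} (fun _ => (1:ℝ)) := by
    ext ω; simp [Set.indicator_apply]
  have hiind : Integrable (fun ω => if Y ω - μ₀ ≤ 0 then (1:ℝ) else 0) P := by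
    rw [hind]; exact (integrable_const (1:ℝ)).indicator hAset
  have hIind : ∫ ω, (if Y ω - μ₀ ≤ 0 then (1:ℝ) else 0) ∂P = τ := by
    rw [hind, integral_indicator_const (1:ℝ) hAset, measureReal_def, hqA,
      ENNReal.toReal_ofReal hτ0.le]
    simp
  have hIc : ∫ ω, c ω ∂P = 0 := by
    rw [hc]
    simp only
    rw [integral_const_mul, integral_sub hiind (integrable_const τ), hIind]
    simp
  -- ∫ ψ = |v| * P(E)
  have hIψ : ∫ ω, ψ ω ∂P = |v| * (P E).toReal := by
    have hind2 : (fun ω => if 0 < |Y ω - μ₀| ∧ |Y ω - μ₀| < |v| then (1:ℝ) else 0)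
        = Set.indicator E (fun _ => (1:ℝ)) := by
      ext ω; simp [Set.indicator_apply, hE, Set.mem_setOf_eq]
    rw [hψ]
    simp only
    rw [integral_const_mul, hind2, integral_indicator_const (1:ℝ) hEset, measureReal_def]
    simp [mul_comm]
  constructor
  · calc ∫ ω, (checkFun τ (Y ω - μt) - checkFun τ (Y ω - μ₀)) ∂P
        = ∫ ω, ((checkFun τ (Y ω - μt) - checkFun τ (Y ω - μ₀)) - c ω) ∂P
          + ∫ ω, c ω ∂P := by rw [integral_sub hig hic]; ring
      _ = ∫ ω, ((checkFun τ (Y ω - μt) - checkFun τ (Y ω - μ₀)) - c ω) ∂P := by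
          rw [hIc]; ring
      _ ≤ ∫ ω, ψ ω ∂P := integral_mono_ae (hig.sub hic) hiψ hae
      _ = |v| * (P E).toReal := hIψ
  · have hle : (P E).toReal ≤ 1 := by
      have h1 : P E ≤ 1 := prob_le_one
      calc (P E).toReal ≤ (1 : ℝ≥0∞).toReal := ENNReal.toReal_mono (by simp) h1
        _ = 1 := by simp
    nlinarith [abs_nonneg v, ENNReal.toReal_nonneg (a := P E)]
end
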